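/- Let Y be a ℂ-uniformly convex complex Banach space, n ∈ ℕ, X a Banach space, ε > 0, and T ∈ L(ℓ∞ⁿ(X), Y) with ‖T‖ ≤ 1. If A ⊂ {1, …, n} satisfies ‖T P_A‖ ≥ 1 − δ_ℂ(ε)/(1 + δ_ℂ(ε)), then ‖T (I − P_A)‖ ≤ ε. -/

import Mathlib

/-- The modulus of ℂ-convexity of a complex normed space `Y`. -/
noncomputable def cplxConvexityModulus (Y : Type*) [NormedAddCommGroup Y] [NormedSpace ℂ Y]
    (ε : ℝ) : ℝ :=
  sInf { d : ℝ | ∃ x y : Y, ‖x‖ = 1 ∧ ‖y‖ = 1 ∧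
    d = sSup { r : ℝ | ∃ lam : ℂ, ‖lam‖ = 1 ∧ r = ‖x + (lam * (ε : ℂ)) • y‖ - 1 } }

lemma modulus_exists_lam (Y : Type*) [NormedAddCommGroup Y] [NormedSpace ℂ Y]
    (ε : ℝ) (x y : Y) (hx : ‖x‖ = 1) (hy : ‖y‖ = 1) (c : ℝ)
    (hc : c < cplxConvexityModulus Y ε) :
    ∃ lam : ℂ, ‖lam‖ = 1 ∧ 1 + c < ‖x + (lam * (ε : ℂ)) • y‖ := by
  have hbddA : ∀ (x' y' : Y), ‖x'‖ = 1 → ‖y'‖ = 1 →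
      BddAbove { r : ℝ | ∃ lam : ℂ, ‖lam‖ = 1 ∧ r = ‖x' + (lam * (ε : ℂ)) • y'‖ - 1 } := by
    intro x' y' hx' hy'
    refine ⟨|ε|, ?_⟩
    rintro r ⟨lam, hlam, rfl⟩
    have : ‖x' + (lam * (ε : ℂ)) • y'‖ ≤ ‖x'‖ + ‖(lam * (ε : ℂ)) • y'‖ := norm_add_le _ _
    rw [norm_smul, norm_mul, hlam, hy', hx'] at this
    simp only [Complex.norm_real, one_mul, mul_one] at this
    rw [Real.norm_eq_abs] at this
    linarith
  have hbdd : BddBelow { d : ℝ | ∃ x y : Y, ‖x‖ = 1 ∧ ‖y‖ = 1 ∧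
      d = sSup { r : ℝ | ∃ lam : ℂ, ‖lam‖ = 1 ∧ r = ‖x + (lam * (ε : ℂ)) • y‖ - 1 } } := by
    refine ⟨-1, ?_⟩
    rintro d ⟨x', y', hx', hy', rfl⟩
    have hmem : ‖x' + ((1 : ℂ) * (ε : ℂ)) • y'‖ - 1 ∈
        { r : ℝ | ∃ lam : ℂ, ‖lam‖ = 1 ∧ r = ‖x' + (lam * (ε : ℂ)) • y'‖ - 1 } :=
      ⟨1, by simp, rfl⟩
    have h1 : (-1 : ℝ) ≤ ‖x' + ((1 : ℂ) * (ε : ℂ)) • y'‖ - 1 := by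
      have := norm_nonneg (x' + ((1 : ℂ) * (ε : ℂ)) • y'); linarith
    exact h1.trans (le_csSup (hbddA x' y' hx' hy') hmem)
  have hmemS : sSup { r : ℝ | ∃ lam : ℂ, ‖lam‖ = 1 ∧ r = ‖x + (lam * (ε : ℂ)) • y‖ - 1 } ∈
      { d : ℝ | ∃ x y : Y, ‖x‖ = 1 ∧ ‖y‖ = 1 ∧
        d = sSup { r : ℝ | ∃ lam : ℂ, ‖lam‖ = 1 ∧ r = ‖x + (lam * (ε : ℂ)) • y‖ - 1 } } :=
    ⟨x, y, hx, hy, rfl⟩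
  have hle : cplxConvexityModulus Y ε ≤
      sSup { r : ℝ | ∃ lam : ℂ, ‖lam‖ = 1 ∧ r = ‖x + (lam * (ε : ℂ)) • y‖ - 1 } :=
    csInf_le hbdd hmemS
  have hne : { r : ℝ | ∃ lam : ℂ, ‖lam‖ = 1 ∧ r = ‖x + (lam * (ε : ℂ)) • y‖ - 1 }.Nonempty :=
    ⟨‖x + ((1 : ℂ) * (ε : ℂ)) • y‖ - 1, 1, by simp, rfl⟩
  obtain ⟨r, ⟨lam, hlam, rfl⟩, hr⟩ := exists_lt_of_lt_csSup hne (lt_of_lt_of_le hc hle)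
  exact ⟨lam, hlam, by linarith⟩


set_option maxHeartbeats 1000000 in
/-- Lemma 2.2 (second part), for the finite sum `ℓ∞ⁿ(X) = Fin n → X` with
the maximum norm; `P` is the canonical band projection onto the coordinates in `A`. -/
theorem projection_estimate_finite
    (X Y : Type*) [NormedAddCommGroup X] [NormedSpace ℂ X] [CompleteSpace X]
    [NormedAddCommGroup Y] [NormedSpace ℂ Y] [CompleteSpace Y]
    (hY : ∀ ε : ℝ, 0 < ε → 0 < cplxConvexityModulus Y ε)
    (n : ℕ) (ε : ℝ) (hε : 0 < ε)
    (T : (Fin n → X) →L[ℂ] Y) (hT : ‖T‖ ≤ 1)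
    (A : Set (Fin n))
    (P : (Fin n → X) →L[ℂ] (Fin n → X))
    (hP : ∀ (x : Fin n → X) (i : Fin n), P x i = A.indicator (fun j => x j) i)
    (hTP : ‖T.comp P‖ ≥ 1 - cplxConvexityModulus Y ε / (1 + cplxConvexityModulus Y ε)) :
    ‖T - T.comp P‖ ≤ ε := by
  set δ := cplxConvexityModulus Y ε with hδdef
  have hδ : 0 < δ := hY ε hε
  have hδ1 : (0 : ℝ) < 1 + δ := by linarith
  have hTP' : 1 / (1 + δ) ≤ ‖T.comp P‖ := by
    have : 1 - δ / (1 + δ) = 1 / (1 + δ) := by field_simp; ring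
    rw [← this]; exact hTP
  -- P is a contraction
  have hPnorm : ∀ z : Fin n → X, ‖P z‖ ≤ ‖z‖ := by
    intro z
    rw [pi_norm_le_iff_of_nonneg (norm_nonneg z)]
    intro i
    rw [hP z i]
    by_cases hi : i ∈ A
    · rw [Set.indicator_of_mem hi]; exact norm_le_pi_norm z i
    · rw [Set.indicator_of_notMem hi]; simp
  refine (T - T.comp P).opNorm_le_bound hε.le ?_
  intro v
  by_contra hcon
  push_neg at hcon
  -- v ≠ 0
  have hv : 0 < ‖v‖ := by
    rcases (norm_nonneg v).lt_or_eq with h | h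
    · exact h
    · exfalso
      have : v = 0 := by rwa [eq_comm, norm_eq_zero] at h
      rw [this] at hcon
      simp at hcon
  set w : Fin n → X := ‖v‖⁻¹ • (v - P v) with hwdef
  -- basic facts about w
  have hwA : ∀ i ∈ A, w i = 0 := by
    intro i hi
    simp only [hwdef, Pi.smul_apply, Pi.sub_apply, hP v i, Set.indicator_of_mem hi]
    simp
  have hwle : ‖w‖ ≤ 1 := by
    rw [hwdef, norm_smul, norm_inv, norm_norm]
    have h1 : ‖v - P v‖ ≤ ‖v‖ := by
      rw [pi_norm_le_iff_of_nonneg (norm_nonneg v)]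
      intro i
      simp only [Pi.sub_apply, hP v i]
      by_cases hi : i ∈ A
      · rw [Set.indicator_of_mem hi]; simp
      · rw [Set.indicator_of_notMem hi]; simpa using norm_le_pi_norm v i
    calc ‖v‖⁻¹ * ‖v - P v‖ ≤ ‖v‖⁻¹ * ‖v‖ := by
          exact mul_le_mul_of_nonneg_left h1 (inv_nonneg.mpr (norm_nonneg v))
      _ = 1 := inv_mul_cancel₀ hv.ne'
  set b := ‖T w‖ with hbdef
  have hb : ε < b := by
    have hTw : T w = ‖v‖⁻¹ • ((T - T.comp P) v) := by
      simp only [hwdef, map_smul, map_sub]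
      simp [ContinuousLinearMap.comp_apply, ContinuousLinearMap.sub_apply]
    rw [hbdef, hTw, norm_smul, norm_inv, norm_norm]
    rw [← div_eq_inv_mul, lt_div_iff₀ hv]
    linarith
  have hb0 : 0 < b := hε.trans hb
  have hsε : 1 < b / ε := (one_lt_div hε).mpr hb
  -- choose η
  set η := min (δ ^ 2 / ((1 + δ) * (1 + b / ε))) (1 / (2 * (1 + δ))) with hηdef
  have hbε0 : 0 < 1 + b / ε := by positivity
  have hη0 : 0 < η := lt_min (by positivity) (by positivity)
  have hη1 : η ≤ δ ^ 2 / ((1 + δ) * (1 + b / ε)) := min_le_left _ _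
  have hη2 : η ≤ 1 / (2 * (1 + δ)) := min_le_right _ _
  have hη3 : η < 1 / (1 + δ) := by
    have : 1 / (2 * (1 + δ)) < 1 / (1 + δ) := by
      apply div_lt_div_of_pos_left one_pos hδ1; linarith
    linarith
  have hηδ : η < δ := by
    have h1 : δ ^ 2 / ((1 + δ) * (1 + b / ε)) < δ := by
      rw [div_lt_iff₀ (by positivity)]
      have e : δ * ((1 + δ) * (1 + b / ε)) = δ + δ * (b / ε) + δ * δ + δ * (δ * (b / ε)) := by
        ring
      have e2 : δ ^ 2 = δ * δ := sq δ
      have p1 : 0 < δ * (b / ε) := mul_pos hδ (by linarith)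
      have p2 : 0 < δ * (δ * (b / ε)) := mul_pos hδ p1
      linarith
    linarith
  -- choose u with ‖u‖ < 1 and ‖T (P u)‖ > ‖T.comp P‖ - η
  obtain ⟨u, hu1, hu2⟩ := (T.comp P).exists_lt_apply_of_lt_opNorm
    (show ‖T.comp P‖ - η < ‖T.comp P‖ by linarith)
  rw [ContinuousLinearMap.comp_apply] at hu2
  set a := ‖T (P u)‖ with hadef
  have ha0 : 0 < a := by
    have : 0 < ‖T.comp P‖ - η := by linarith
    linarith
  have ha1 : a < 1 := by
    have h1 : a ≤ ‖T‖ * ‖P u‖ := T.le_opNorm (P u)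
    have h2 : ‖P u‖ ≤ ‖u‖ := hPnorm u
    have h3 : ‖T‖ * ‖P u‖ ≤ 1 * ‖P u‖ :=
      mul_le_mul_of_nonneg_right hT (norm_nonneg _)
    calc a ≤ ‖T‖ * ‖P u‖ := h1
      _ ≤ 1 * ‖P u‖ := h3
      _ = ‖P u‖ := one_mul _
      _ ≤ ‖u‖ := h2
      _ < 1 := hu1
  -- normalized vectors
  set x : Y := ((a : ℂ))⁻¹ • T (P u) with hxdef
  set y : Y := ((b : ℂ))⁻¹ • T w with hydef
  have hx : ‖x‖ = 1 := by
    rw [hxdef, norm_smul, norm_inv, Complex.norm_real, Real.norm_eq_abs,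
      abs_of_pos ha0, ← hadef, inv_mul_cancel₀ ha0.ne']
  have hy : ‖y‖ = 1 := by
    rw [hydef, norm_smul, norm_inv, Complex.norm_real, Real.norm_eq_abs,
      abs_of_pos hb0, ← hbdef, inv_mul_cancel₀ hb0.ne']
  set t := b / a with htdef
  have ht0 : 0 < t := div_pos hb0 ha0
  have htε : ε < t := by
    rw [htdef, lt_div_iff₀ ha0]
    have h1 : ε * a < ε * 1 := mul_lt_mul_of_pos_left ha1 hε
    linarith
  -- get lam from the modulus
  obtain ⟨lam, hlam, hκ⟩ := modulus_exists_lam Y ε x y hx hy (δ - η) (by rw [← hδdef]; linarith)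
  -- triangle inequality trick
  have htri : ‖x + (lam * (ε : ℂ)) • y‖ ≤
      (ε / t) * ‖x + (lam * (t : ℝ)) • y‖ + (1 - ε / t) := by
    have htC : ((t : ℝ) : ℂ) ≠ 0 := by exact_mod_cast ht0.ne'
    have hbC : ((b : ℝ) : ℂ) ≠ 0 := by exact_mod_cast hb0.ne'
    have hid : x + (lam * (ε : ℂ)) • y =
        (((ε / t : ℝ)) : ℂ) • (x + (lam * (t : ℝ)) • y) + (((1 - ε / t : ℝ)) : ℂ) • x := by
      match_scalars
      · ring
      · field_simp [htC]
    rw [hid]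
    calc ‖_ + _‖ ≤ ‖(((ε / t : ℝ)) : ℂ) • (x + (lam * (t : ℝ)) • y)‖ +
          ‖(((1 - ε / t : ℝ)) : ℂ) • x‖ := norm_add_le _ _
      _ = (ε / t) * ‖x + (lam * (t : ℝ)) • y‖ + (1 - ε / t) := by
          rw [norm_smul, norm_smul, Complex.norm_real, Complex.norm_real, hx,
            Real.norm_eq_abs, Real.norm_eq_abs, abs_of_pos (div_pos hε ht0),
            abs_of_nonneg (by rw [sub_nonneg, div_le_one ht0]; linarith), mul_one]
  set N := ‖x + (lam * (t : ℝ)) • y‖ with hNdef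
  have hN : 1 + (t / ε) * (δ - η) < N := by
    have h1 : 1 + (δ - η) < (ε / t) * N + (1 - ε / t) := lt_of_lt_of_le hκ htri
    have h2 : (δ - η) + ε / t < (ε / t) * N := by linarith
    have h3 : (t / ε) * ((δ - η) + ε / t) < (t / ε) * ((ε / t) * N) := by
      apply mul_lt_mul_of_pos_left h2 (div_pos ht0 hε)
    have h4 : (t / ε) * ((ε / t) * N) = N := by
      field_simp
    have h5 : (t / ε) * ((δ - η) + ε / t) = (t / ε) * (δ - η) + 1 := by
      field_simp
    linarith
  -- the key vector
  have hkey : T (P u + lam • w) = (a : ℂ) • (x + (lam * (t : ℝ)) • y) := by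
    rw [map_add, map_smul]
    rw [hxdef, hydef, smul_add, smul_smul, smul_smul, smul_smul]
    congr 1
    · rw [mul_inv_cancel₀ (by exact_mod_cast ha0.ne'), one_smul]
    · congr 1
      have haC : ((a : ℝ) : ℂ) ≠ 0 := by exact_mod_cast ha0.ne'
      have hbC : ((b : ℝ) : ℂ) ≠ 0 := by exact_mod_cast hb0.ne'
      rw [htdef]
      push_cast
      field_simp
  have hnorm1 : ‖P u + lam • w‖ ≤ 1 := by
    rw [pi_norm_le_iff_of_nonneg zero_le_one]
    intro i
    simp only [Pi.add_apply, Pi.smul_apply, hP u i]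
    by_cases hi : i ∈ A
    · rw [Set.indicator_of_mem hi, hwA i hi, smul_zero, add_zero]
      exact (norm_le_pi_norm u i).trans hu1.le
    · rw [Set.indicator_of_notMem hi, zero_add, norm_smul, hlam, one_mul]
      exact (norm_le_pi_norm w i).trans hwle
  have hTbound : ‖T (P u + lam • w)‖ ≤ 1 := by
    calc ‖T (P u + lam • w)‖ ≤ ‖T‖ * ‖P u + lam • w‖ := T.le_opNorm _
      _ ≤ 1 * 1 := by
          apply mul_le_mul hT hnorm1 (norm_nonneg _) (by linarith [norm_nonneg T])
      _ = 1 := one_mul 1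
  have hTnorm : ‖T (P u + lam • w)‖ = a * N := by
    rw [hkey, norm_smul, Complex.norm_real, Real.norm_eq_abs, abs_of_pos ha0, hNdef]
  -- combine
  have hta : a * (t / ε) = b / ε := by
    rw [htdef]; field_simp
  have hfinal : a + (b / ε) * (δ - η) < 1 := by
    have h1 : a * (1 + (t / ε) * (δ - η)) < a * N := mul_lt_mul_of_pos_left hN ha0
    have h2 : a * (1 + (t / ε) * (δ - η)) = a + (b / ε) * (δ - η) := by
      rw [mul_add, mul_one, ← mul_assoc, hta]
    rw [h2] at h1
    calc a + (b / ε) * (δ - η) < a * N := h1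
      _ = ‖T (P u + lam • w)‖ := hTnorm.symm
      _ ≤ 1 := hTbound
  -- derive contradiction
  have haTP : ‖T.comp P‖ - η < a := hu2
  have hkey2 : η * ((1 + δ) * (1 + b / ε)) ≤ δ ^ 2 := by
    rw [← le_div_iff₀ (by positivity)]
    exact hη1
  set s := b / ε with hsdef
  have e1 : s * (δ - η) = s * δ - s * η := by ring
  have e2 : η * (1 + s) = η + s * η := by ring
  have h2 : δ ≤ s * δ := le_mul_of_one_le_left hδ.le hsε.le
  have h1 : 1 / (1 + δ) + δ - η * (1 + s) < 1 := by linarith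
  have h3 : η * (1 + s) * (1 + δ) ≤ δ ^ 2 := by
    rw [show η * (1 + s) * (1 + δ) = η * ((1 + δ) * (1 + s)) from by ring]
    exact hkey2
  have h4 : (1 / (1 + δ) + δ - η * (1 + s)) * (1 + δ) < 1 * (1 + δ) :=
    mul_lt_mul_of_pos_right h1 hδ1
  have hinv : 1 / (1 + δ) * (1 + δ) = 1 := by field_simp
  have e4 : (1 / (1 + δ) + δ - η * (1 + s)) * (1 + δ) =
      1 / (1 + δ) * (1 + δ) + δ * (1 + δ) - η * (1 + s) * (1 + δ) := by ring
  have e5 : δ * (1 + δ) = δ + δ ^ 2 := by ring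
  linarith
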